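/- Fix M ≥ 1 and x ∈ ℝ^M. Define, for integers N large enough that all factors are positive, f_{M,N}(x) = b_{M,N} · ∏_{j=1}^{M} ( 1 − x_j²/(M+N+1−j) )^{(M+N−j−2)/2}, where b_{M,N} = ∏_{j=1}^{M} Γ((M+N+1−j)/2) / ( √π · Γ((M+N−j)/2) · √(M+N+1−j) ). Then lim_{N→∞} f_{M,N}(x) = (2π)^{−M/2} · exp( −‖x‖²/2 ), the density at x of the standard Gaussian distribution on ℝ^M. -/

import Mathlib

open Filter Real Topology

/-- Upper Gautschi-type bound `Γ(s+1/2) ≤ √s Γ(s)` from log-convexity. -/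
lemma gamma_half_upper {s : ℝ} (hs : 0 < s) :
    Real.Gamma (s + 1/2) ≤ Real.sqrt s * Real.Gamma s := by
  have h1 : (0:ℝ) < Real.Gamma s := Real.Gamma_pos_of_pos hs
  have key := convexOn_log_Gamma.2 (Set.mem_Ioi.mpr hs)
      (Set.mem_Ioi.mpr (show (0:ℝ) < s + 1 by linarith))
      (by norm_num : (0:ℝ) ≤ 1/2) (by norm_num : (0:ℝ) ≤ 1/2) (by norm_num)
  simp only [smul_eq_mul, Function.comp] at key
  have harg : (1/2:ℝ) * s + (1/2) * (s+1) = s + 1/2 := by ring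
  rw [harg] at key
  have heq : (1/2:ℝ) * Real.log (Real.Gamma s) + (1/2) * Real.log (Real.Gamma (s+1))
      = Real.log (Real.sqrt s * Real.Gamma s) := by
    rw [Real.Gamma_add_one hs.ne', Real.log_mul hs.ne' h1.ne',
      Real.log_mul (Real.sqrt_ne_zero'.mpr hs) h1.ne', Real.log_sqrt hs.le]
    ring
  rw [heq] at key
  have hpos : 0 < Real.sqrt s * Real.Gamma s := mul_pos (Real.sqrt_pos.mpr hs) h1
  calc Real.Gamma (s + 1/2)
      = Real.exp (Real.log (Real.Gamma (s + 1/2))) :=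
        (Real.exp_log (Real.Gamma_pos_of_pos (by linarith))).symm
    _ ≤ Real.exp (Real.log (Real.sqrt s * Real.Gamma s)) := Real.exp_le_exp.mpr key
    _ = _ := Real.exp_log hpos

/-- Lower Gautschi-type bound `s Γ(s) ≤ √(s+1/2) Γ(s+1/2)` from log-convexity. -/
lemma gamma_half_lower {s : ℝ} (hs : 0 < s) :
    s * Real.Gamma s ≤ Real.sqrt (s + 1/2) * Real.Gamma (s + 1/2) := by
  have hs2 : (0:ℝ) < s + 1/2 := by linarith
  have h1 : (0:ℝ) < Real.Gamma (s + 1/2) := Real.Gamma_pos_of_pos hs2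
  have key := convexOn_log_Gamma.2 (Set.mem_Ioi.mpr hs2)
      (Set.mem_Ioi.mpr (show (0:ℝ) < s + 3/2 by linarith))
      (by norm_num : (0:ℝ) ≤ 1/2) (by norm_num : (0:ℝ) ≤ 1/2) (by norm_num)
  simp only [smul_eq_mul, Function.comp] at key
  have harg : (1/2:ℝ) * (s + 1/2) + (1/2) * (s + 3/2) = s + 1 := by ring
  rw [harg] at key
  have h32 : Real.Gamma (s + 3/2) = (s + 1/2) * Real.Gamma (s + 1/2) := by
    have := Real.Gamma_add_one hs2.ne'
    rw [show s + 1/2 + 1 = s + 3/2 by ring] at this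
    exact this
  have heq : (1/2:ℝ) * Real.log (Real.Gamma (s+1/2)) + (1/2) * Real.log (Real.Gamma (s+3/2))
      = Real.log (Real.sqrt (s + 1/2) * Real.Gamma (s + 1/2)) := by
    rw [h32, Real.log_mul hs2.ne' h1.ne',
      Real.log_mul (Real.sqrt_ne_zero'.mpr hs2) h1.ne', Real.log_sqrt hs2.le]
    ring
  rw [heq] at key
  have hpos : 0 < Real.sqrt (s + 1/2) * Real.Gamma (s + 1/2) :=
    mul_pos (Real.sqrt_pos.mpr hs2) h1
  have hG1 : Real.Gamma (s + 1) = s * Real.Gamma s := Real.Gamma_add_one hs.ne'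
  calc s * Real.Gamma s
      = Real.exp (Real.log (Real.Gamma (s + 1))) := by
        rw [Real.exp_log (Real.Gamma_pos_of_pos (by linarith)), hG1]
    _ ≤ Real.exp (Real.log (Real.sqrt (s+1/2) * Real.Gamma (s+1/2))) := Real.exp_le_exp.mpr key
    _ = _ := Real.exp_log hpos

/-- Limit of `s / (a s + b)` at infinity. -/
lemma lin_ratio_tendsto (a b : ℝ) (ha : 0 < a) :
    Tendsto (fun s : ℝ => s / (a * s + b)) atTop (𝓝 a⁻¹) := by
  have h0 : Tendsto (fun s : ℝ => a + b / s) atTop (𝓝 a) := by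
    have := (tendsto_const_nhds (α := ℝ) (x := b)).div_atTop tendsto_id
    simpa using (tendsto_const_nhds (x := a)).add this
  refine (h0.inv₀ ha.ne').congr' ?_
  filter_upwards [eventually_gt_atTop (max 0 (|b|/a + 1))] with s hsm
  have hs : 0 < s := lt_of_le_of_lt (le_max_left _ _) hsm
  have hb : |b|/a + 1 ≤ s := le_of_lt (lt_of_le_of_lt (le_max_right _ _) hsm)
  have hab : 0 < a * s + b := by
    nlinarith [le_abs_self b, neg_abs_le b, abs_nonneg b, div_le_iff₀ ha |>.mp (le_refl (|b|/a))]
  field_simp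

/-- The Gamma ratio limit: `Γ(s+1/2) / (Γ(s) √(2s+1)) → 1/√2`. -/
lemma gamma_ratio_tendsto :
    Tendsto (fun s : ℝ => Real.Gamma (s + 1/2) / (Real.Gamma s * Real.sqrt (2*s+1))) atTop
      (𝓝 (Real.sqrt 2)⁻¹) := by
  have hhalf : Tendsto (fun s : ℝ => s / (2 * s + 1)) atTop (𝓝 (1/2 : ℝ)) := by
    simpa using lin_ratio_tendsto 2 1 two_pos
  have hone : Tendsto (fun s : ℝ => s / (1 * s + 1/2)) atTop (𝓝 (1:ℝ)) := by
    simpa using lin_ratio_tendsto 1 (1/2) one_pos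
  have hsq2 : Real.sqrt (1/2 : ℝ) = (Real.sqrt 2)⁻¹ := by
    rw [show (1/2 : ℝ) = 2⁻¹ by norm_num, Real.sqrt_inv]
  -- upper bound function
  have hupper : Tendsto (fun s : ℝ => Real.sqrt s / Real.sqrt (2*s+1)) atTop
      (𝓝 (Real.sqrt 2)⁻¹) := by
    have := (Real.continuous_sqrt.tendsto (1/2 : ℝ)).comp hhalf
    rw [hsq2] at this
    refine this.congr' ?_
    filter_upwards [eventually_ge_atTop (0:ℝ)] with s hs
    simp only [Function.comp]
    rw [Real.sqrt_div hs]
  -- lower bound function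
  have hlower : Tendsto (fun s : ℝ => s / (Real.sqrt (s + 1/2) * Real.sqrt (2*s+1))) atTop
      (𝓝 (Real.sqrt 2)⁻¹) := by
    have h1 := (Real.continuous_sqrt.tendsto (1 : ℝ)).comp hone
    rw [Real.sqrt_one] at h1
    have h2 := (Real.continuous_sqrt.tendsto (1/2 : ℝ)).comp hhalf
    rw [hsq2] at h2
    have h3 := h1.mul h2
    rw [one_mul] at h3
    refine h3.congr' ?_
    filter_upwards [eventually_gt_atTop (0:ℝ)] with s hs
    simp only [Function.comp]
    rw [one_mul, Real.sqrt_div hs.le, Real.sqrt_div hs.le]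
    rw [div_mul_div_comm, Real.mul_self_sqrt hs.le]
  refine tendsto_of_tendsto_of_tendsto_of_le_of_le' hlower hupper ?_ ?_
  · filter_upwards [eventually_gt_atTop (0:ℝ)] with s hs
    have hG : 0 < Real.Gamma s := Real.Gamma_pos_of_pos hs
    have hr : 0 < Real.sqrt (2*s+1) := Real.sqrt_pos.mpr (by linarith)
    have hq : 0 < Real.sqrt (s + 1/2) := Real.sqrt_pos.mpr (by linarith)
    rw [div_le_div_iff₀ (mul_pos hq hr) (mul_pos hG hr)]
    have := mul_le_mul_of_nonneg_right (gamma_half_lower hs) hr.le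
    nlinarith
  · filter_upwards [eventually_gt_atTop (0:ℝ)] with s hs
    have hG : 0 < Real.Gamma s := Real.Gamma_pos_of_pos hs
    have hr : 0 < Real.sqrt (2*s+1) := Real.sqrt_pos.mpr (by linarith)
    rw [div_le_div_iff₀ (mul_pos hG hr) hr]
    have := mul_le_mul_of_nonneg_right (gamma_half_upper hs) hr.le
    nlinarith

/-- The normalizing factor limit as a function of `t`. -/
lemma gamma_factor_tendsto :
    Tendsto (fun t : ℝ =>
        Real.Gamma (t/2) / (Real.sqrt Real.pi * Real.Gamma ((t-1)/2) * Real.sqrt t)) atTop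
      (𝓝 ((2 * Real.pi) ^ (-(1:ℝ)/2))) := by
  have hcomp : Tendsto (fun t : ℝ => (t-1)/2) atTop atTop :=
    (tendsto_atTop_add_const_right atTop (-1 : ℝ) tendsto_id).atTop_div_const two_pos
  have h1 := gamma_ratio_tendsto.comp hcomp
  have h1' : Tendsto (fun t : ℝ =>
      Real.Gamma (t/2) / (Real.Gamma ((t-1)/2) * Real.sqrt t)) atTop
      (𝓝 (Real.sqrt 2)⁻¹) := by
    refine h1.congr fun t => ?_
    simp only [Function.comp]
    rw [show (t-1)/2 + 1/2 = t/2 by ring, show 2*((t-1)/2)+1 = t by ring]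
  have h2 := h1'.const_mul (Real.sqrt Real.pi)⁻¹
  have hval : (Real.sqrt Real.pi)⁻¹ * (Real.sqrt 2)⁻¹ = (2 * Real.pi) ^ (-(1:ℝ)/2) := by
    rw [show (-(1:ℝ)/2) = -(1/2 : ℝ) by norm_num,
      Real.rpow_neg (by positivity : (0:ℝ) ≤ 2 * Real.pi), ← Real.sqrt_eq_rpow,
      Real.sqrt_mul (by norm_num : (0:ℝ) ≤ 2) Real.pi, mul_inv, mul_comm]
  rw [hval] at h2
  refine h2.congr fun t => ?_
  field_simp

/-- The power factor limit: `(1 - a/t)^((t-3)/2) → exp(-a/2)`. -/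
lemma pow_factor_tendsto (a : ℝ) :
    Tendsto (fun t : ℝ => (1 - a/t) ^ ((t-3)/2)) atTop (𝓝 (Real.exp (-a/2))) := by
  have hdiv : Tendsto (fun t : ℝ => t/2) atTop atTop :=
    tendsto_id.atTop_div_const two_pos
  have h1 := (tendsto_one_add_div_rpow_exp (-a/2)).comp hdiv
  have hc : Tendsto (fun t : ℝ => 1 - a/t) atTop (𝓝 1) := by
    have := (tendsto_const_nhds (α := ℝ) (x := a)).div_atTop (tendsto_id (α := ℝ))
    have h := (tendsto_const_nhds (x := (1:ℝ))).sub this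
    simpa using h
  have h3 : Tendsto (fun t : ℝ => (1 - a/t) ^ (-3/2 : ℝ)) atTop (𝓝 1) := by
    have hcont := (Real.continuousAt_rpow_const 1 (-3/2) (Or.inl one_ne_zero)).tendsto
    have := hcont.comp hc
    simpa [Real.one_rpow, Function.comp_def] using this
  have h4 := h1.mul h3
  rw [mul_one] at h4
  refine h4.congr' ?_
  filter_upwards [eventually_gt_atTop (max 1 (2*|a|))] with t ht
  have h1t : (1:ℝ) < t := lt_of_le_of_lt (le_max_left _ _) ht
  have ht0 : (0:ℝ) < t := lt_trans zero_lt_one h1t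
  have hta : 2*|a| < t := lt_of_le_of_lt (le_max_right _ _) ht
  have hat : a / t < 1 := by
    rw [div_lt_one ht0]
    have := le_abs_self a
    have := abs_nonneg a
    linarith
  have hb : 0 < 1 - a/t := by linarith
  simp only [Function.comp]
  have he : (1 : ℝ) + -a/2/(t/2) = 1 - a/t := by
    field_simp
    ring
  rw [he, ← Real.rpow_add hb, show t/2 + -3/2 = (t-3)/2 by ring]

/-- The normalizing constant
`b_{M,N} = ∏_{j=1}^M Γ((M+N+1-j)/2)/(√π Γ((M+N-j)/2) √(M+N+1-j))` of the projected
uniform density on the sphere. -/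
noncomputable def bMN (M N : ℕ) : ℝ :=
  ∏ j ∈ Finset.range M,
    Real.Gamma (((M : ℝ) + N + 1 - ((j : ℝ) + 1)) / 2) /
      (Real.sqrt Real.pi * Real.Gamma (((M : ℝ) + N - ((j : ℝ) + 1)) / 2) *
        Real.sqrt ((M : ℝ) + N + 1 - ((j : ℝ) + 1)))

/-- the Poincaré limit: pointwise convergence of the projected
spherical densities `f_{M,N}` to the standard Gaussian density `f_M`. -/
theorem stmt16 (M : ℕ) (hM : 1 ≤ M) (x : Fin M → ℝ) :
    Tendsto (fun N : ℕ =>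
        bMN M N *
          ∏ j : Fin M,
            (1 - x j ^ 2 / ((M : ℝ) + N + 1 - (((j : ℕ) : ℝ) + 1))) ^
              ((((M : ℝ) + N - (((j : ℕ) : ℝ) + 1) - 2)) / 2)
      ) atTop
      (nhds ((2 * Real.pi) ^ (-(M : ℝ) / 2) * Real.exp (-(∑ j, x j ^ 2) / 2))) := by
  -- rewrite the function as a single product over `Fin M`
  have hre : ∀ N : ℕ, bMN M N *
      ∏ j : Fin M, (1 - x j ^ 2 / ((M : ℝ) + N + 1 - (((j : ℕ) : ℝ) + 1))) ^
          ((((M : ℝ) + N - (((j : ℕ) : ℝ) + 1) - 2)) / 2)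
      = ∏ j : Fin M,
          (Real.Gamma (((M : ℝ) + N + 1 - (((j : ℕ) : ℝ) + 1)) / 2) /
            (Real.sqrt Real.pi * Real.Gamma (((M : ℝ) + N - (((j : ℕ) : ℝ) + 1)) / 2) *
              Real.sqrt ((M : ℝ) + N + 1 - (((j : ℕ) : ℝ) + 1))) *
          (1 - x j ^ 2 / ((M : ℝ) + N + 1 - (((j : ℕ) : ℝ) + 1))) ^
            ((((M : ℝ) + N - (((j : ℕ) : ℝ) + 1) - 2)) / 2)) := by
    intro N
    rw [Finset.prod_mul_distrib]
    congr 1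
    rw [bMN, ← Fin.prod_univ_eq_prod_range]
  -- rewrite the limit as a product over `Fin M`
  have hlim : (2 * Real.pi) ^ (-(M : ℝ) / 2) * Real.exp (-(∑ j, x j ^ 2) / 2)
      = ∏ j : Fin M, ((2 * Real.pi) ^ (-(1:ℝ)/2) * Real.exp (-(x j ^ 2)/2)) := by
    rw [Finset.prod_mul_distrib, Finset.prod_const, Finset.card_univ, Fintype.card_fin,
      ← Real.rpow_natCast ((2 * Real.pi) ^ (-(1:ℝ)/2)) M,
      ← Real.rpow_mul (by positivity : (0:ℝ) ≤ 2 * Real.pi), ← Real.exp_sum]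
    congr 1
    · ring_nf
    · congr 1
      rw [← Finset.sum_div, ← Finset.sum_neg_distrib]
  simp only [hre]
  rw [hlim]
  refine tendsto_finset_prod _ fun j _ => ?_
  -- per-coordinate limit
  have ht : Tendsto (fun N : ℕ => (M : ℝ) + N + 1 - (((j : ℕ) : ℝ) + 1)) atTop atTop := by
    refine (tendsto_atTop_add_const_right atTop ((M : ℝ) - (j : ℕ))
      (tendsto_natCast_atTop_atTop (R := ℝ))).congr fun N => ?_
    push_cast
    ring
  refine ((gamma_factor_tendsto.comp ht).mul ((pow_factor_tendsto (x j ^ 2)).comp ht)).congr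
    fun N => ?_
  simp only [Function.comp]
  rw [show (M : ℝ) + N + 1 - (((j : ℕ) : ℝ) + 1) - 1 = (M : ℝ) + N - (((j : ℕ) : ℝ) + 1) by ring,
    show (M : ℝ) + N + 1 - (((j : ℕ) : ℝ) + 1) - 3
      = (M : ℝ) + N - (((j : ℕ) : ℝ) + 1) - 2 by ring]
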